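/- arXiv:0710.5344 — 2 statements merged into one kernel-verified Lean document; each statement's English description precedes it below -/
import Mathlib

section
/- Let N be a prime, κ > 0, and let 𝔞: ℤ_N → ℝ_{≥0} satisfy Σ_{x∈ℤ_N} 𝔞(x) ≤ 1 + κ. Let δ = sup_{r ≠ 0} |𝔞̃(r)|. Let η, ε ∈ (0,1), put ℛ = {r ∈ ℤ_N : |𝔞̃(r)| ≥ η} and ℬ = {x ∈ ℤ_N : ‖xr/N‖ ≤ ε for all r ∈ ℛ}, and set 𝔟 = 1_ℬ/|ℬ| and 𝔞' = 𝔞 * 𝔟 * 𝔟. If ε^{|ℛ|} ≥ δ/κ, then |𝔞'(x)| ≤ (1 + 2κ)/N for every x ∈ ℤ_N. -/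
open Finset

/-- `e(t) = exp(2πit)`. -/
noncomputable def eC (t : ℝ) : ℂ := Complex.exp (2 * Real.pi * Complex.I * t)

/-- The (unnormalized) Fourier transform `f̃(r) = Σ_{x=1}^{N} f(x) e(−xr/N)`
of a function `f : ℤ_N → ℝ`. -/
noncomputable def dft (N : ℕ) (f : ZMod N → ℝ) (r : ZMod N) : ℂ :=
  ∑ x ∈ Finset.Icc 1 N, (f ((x : ℕ) : ZMod N) : ℂ) *
    eC (-(((x : ℕ) : ℝ) * ((r.val : ℕ) : ℝ)) / N)

/-- `‖t‖`: the distance from the real number `t` to the nearest integer. -/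
noncomputable def nint (t : ℝ) : ℝ := |t - round t|

lemma eC_add (s t : ℝ) : eC (s + t) = eC s * eC t := by
  unfold eC; rw [← Complex.exp_add]; congr 1; push_cast; ring

lemma eC_int (m : ℤ) : eC m = 1 := by
  unfold eC
  have := Complex.exp_int_mul_two_pi_mul_I m
  rw [← this]; congr 1; push_cast; ring

lemma eC_intShift (t : ℝ) (m : ℤ) : eC (t + m) = eC t := by
  rw [eC_add, eC_int, mul_one]

lemma eC_eq_of_sub_int {s t : ℝ} (m : ℤ) (h : s - t = m) : eC s = eC t := by
  have : s = t + m := by linarith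
  rw [this, eC_intShift]

lemma norm_eC (t : ℝ) : ‖eC t‖ = 1 := by
  unfold eC
  rw [Complex.norm_exp]
  simp [mul_comm, mul_assoc]

lemma conj_eC (t : ℝ) : (starRingEnd ℂ) (eC t) = eC (-t) := by
  unfold eC; rw [← Complex.exp_conj]; congr 1
  simp only [map_mul, Complex.conj_I, Complex.conj_ofReal, map_ofNat]
  push_cast; ring

lemma eC_pow (t : ℝ) (n : ℕ) : eC t ^ n = eC (n * t) := by
  unfold eC; rw [← Complex.exp_nat_mul]; congr 1; push_cast; ring

lemma eC_zero : eC 0 = 1 := by simp [eC]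

noncomputable def Ech (N : ℕ) (x : ZMod N) : ℂ := eC ((x.val : ℝ) / N)

section EchSec
variable (N : ℕ) [NeZero N]

lemma Ech_natmod (a : ℕ) : eC (((a % N : ℕ) : ℝ) / N) = eC ((a : ℝ) / N) := by
  apply eC_eq_of_sub_int (-(a / N : ℕ) : ℤ)
  have hN : (N : ℝ) ≠ 0 := Nat.cast_ne_zero.mpr (NeZero.ne N)
  have h : (a : ℝ) = ((a % N : ℕ) : ℝ) + N * ((a / N : ℕ) : ℝ) := by
    exact_mod_cast (Nat.mod_add_div a N).symm
  rw [div_sub_div_same, div_eq_iff hN, Int.cast_neg, Int.cast_natCast]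
  linarith

lemma Ech_add (x y : ZMod N) : Ech N (x + y) = Ech N x * Ech N y := by
  unfold Ech
  rw [← eC_add, ← add_div, ZMod.val_add, Ech_natmod]
  push_cast; ring_nf

lemma Ech_zero : Ech N 0 = 1 := by simp [Ech, eC_zero]

lemma Ech_neg (x : ZMod N) : Ech N (-x) = (Ech N x)⁻¹ := by
  have h : Ech N x * Ech N (-x) = 1 := by
    rw [← Ech_add]; simp [Ech_zero]
  exact (inv_eq_of_mul_eq_one_right h).symm

lemma norm_Ech (x : ZMod N) : ‖Ech N x‖ = 1 := norm_eC _

lemma Ech_ne_zero (x : ZMod N) : Ech N x ≠ 0 := by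
  intro h; have := norm_Ech N x; rw [h] at this; simp at this

lemma conj_Ech (x : ZMod N) : (starRingEnd ℂ) (Ech N x) = Ech N (-x) := by
  rw [Ech_neg, Complex.inv_def]
  have h : Complex.normSq (Ech N x) = 1 := by
    rw [Complex.normSq_eq_norm_sq, norm_Ech]; norm_num
  rw [h]; simp

lemma Ech_mul_eq_pow (x r : ZMod N) : Ech N (x * r) = Ech N x ^ r.val := by
  unfold Ech
  rw [ZMod.val_mul, Ech_natmod, eC_pow]
  congr 1; push_cast
  field_simp

lemma Ech_ne_one {x : ZMod N} (hx : x ≠ 0) : Ech N x ≠ 1 := by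
  unfold Ech eC
  rw [Ne, Complex.exp_eq_one_iff]
  rintro ⟨n, hn⟩
  have hπ : (2 * Real.pi * Complex.I : ℂ) ≠ 0 := by
    simp [Real.pi_ne_zero, Complex.I_ne_zero]
  have ht : ((x.val : ℝ) / N : ℂ) = (n : ℂ) := by
    apply mul_left_cancel₀ hπ
    push_cast at hn ⊢
    linear_combination hn
  have ht' : (x.val : ℝ) / N = (n : ℝ) := by exact_mod_cast ht
  have h1 : 0 < (x.val : ℝ) / N := by
    apply div_pos
    · exact_mod_cast Nat.pos_of_ne_zero (fun h => hx (by rwa [← ZMod.val_eq_zero]))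
    · exact_mod_cast Nat.pos_of_ne_zero (NeZero.ne N)
  have h2 : (x.val : ℝ) / N < 1 := by
    rw [div_lt_one (by exact_mod_cast Nat.pos_of_ne_zero (NeZero.ne N))]
    exact_mod_cast ZMod.val_lt x
  rw [ht'] at h1 h2
  have : (0:ℤ) < n := by exact_mod_cast h1
  have : (n:ℤ) < 1 := by exact_mod_cast h2
  omega

lemma sum_pow_val (z : ℂ) : ∑ r : ZMod N, z ^ r.val = ∑ j ∈ Finset.range N, z ^ j := by
  refine Finset.sum_nbij' (fun r => r.val) (fun j => (j : ZMod N)) ?_ ?_ ?_ ?_ ?_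
  · intro r _; exact Finset.mem_range.mpr (ZMod.val_lt r)
  · intro j _; exact Finset.mem_univ _
  · intro r _; exact ZMod.natCast_rightInverse r
  · intro j hj; exact ZMod.val_cast_of_lt (Finset.mem_range.mp hj)
  · intro r _; rfl

lemma sum_Ech (x : ZMod N) :
    ∑ r : ZMod N, Ech N (x * r) = if x = 0 then (N : ℂ) else 0 := by
  split_ifs with h
  · subst h
    simp only [zero_mul, Ech_zero]
    simp [ZMod.card]
  · simp only [Ech_mul_eq_pow]
    rw [sum_pow_val, geom_sum_eq (Ech_ne_one N h)]
    have : Ech N x ^ N = 1 := by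
      unfold Ech
      rw [eC_pow]
      have hN : (N : ℝ) ≠ 0 := Nat.cast_ne_zero.mpr (NeZero.ne N)
      have : (N : ℝ) * ((x.val : ℝ) / N) = (x.val : ℤ) := by push_cast; field_simp
      rw [this, eC_int]
    rw [this]; simp

end EchSec


noncomputable def Ftr (N : ℕ) [NeZero N] (f : ZMod N → ℝ) (r : ZMod N) : ℂ :=
  ∑ z : ZMod N, (f z : ℂ) * Ech N (-(z * r))

section FtrSec
variable (N : ℕ) [NeZero N]

lemma dft_eq_Ftr (f : ZMod N → ℝ) (r : ZMod N) : dft N f r = Ftr N f r := by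
  have hNpos : 0 < N := Nat.pos_of_ne_zero (NeZero.ne N)
  unfold dft Ftr
  refine Finset.sum_nbij' (fun x => ((x : ℕ) : ZMod N))
    (fun z => if z = 0 then N else z.val) ?_ ?_ ?_ ?_ ?_
  · intro x _; exact Finset.mem_univ _
  · intro z _
    split_ifs with h
    · exact Finset.mem_Icc.mpr ⟨hNpos, le_refl N⟩
    · refine Finset.mem_Icc.mpr ⟨?_, le_of_lt (ZMod.val_lt z)⟩
      exact Nat.pos_of_ne_zero (fun hv => h (by rwa [← ZMod.val_eq_zero]))
  · intro x hx
    rw [Finset.mem_Icc] at hx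
    by_cases h : ((x : ℕ) : ZMod N) = 0
    · rw [if_pos h]
      have : N ∣ x := (ZMod.natCast_eq_zero_iff x N).mp h
      have hNx : N ≤ x := Nat.le_of_dvd (by omega) this
      omega
    · rw [if_neg h]
      have hxN : x ≠ N := by
        intro hxn; apply h; rw [hxn]; exact ZMod.natCast_self N
      have hlt : x < N := by omega
      exact ZMod.val_cast_of_lt hlt
  · intro z _
    split_ifs with h
    · rw [h]; exact (ZMod.natCast_self N)
    · exact ZMod.natCast_rightInverse z
  · intro x hx
    congr 1
    have hdvd : N ∣ ((-(((x : ℕ) : ZMod N) * r)).val + x * r.val) := by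
      have h0 : ((((-(((x : ℕ) : ZMod N) * r)).val + x * r.val : ℕ)) : ZMod N) = 0 := by
        push_cast
        rw [ZMod.natCast_rightInverse, ZMod.natCast_rightInverse]
        ring
      exact (ZMod.natCast_eq_zero_iff _ N).mp h0
    obtain ⟨m, hm⟩ := hdvd
    unfold Ech
    apply eC_eq_of_sub_int (-(m:ℤ))
    have hN : (N : ℝ) ≠ 0 := Nat.cast_ne_zero.mpr (NeZero.ne N)
    have hR : (((-(((x : ℕ) : ZMod N) * r)).val : ℕ) : ℝ) + ((x * r.val : ℕ) : ℝ)
        = (N : ℝ) * m := by exact_mod_cast congrArg (fun k : ℕ => (k : ℝ)) hm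
    rw [Int.cast_neg, Int.cast_natCast, div_sub_div_same, div_eq_iff hN]
    push_cast at hR
    linarith

end FtrSec

section FtrSec2
variable (N : ℕ) [NeZero N]

lemma Ftr_zero (f : ZMod N → ℝ) : Ftr N f 0 = ((∑ z : ZMod N, f z : ℝ) : ℂ) := by
  unfold Ftr
  push_cast
  refine Finset.sum_congr rfl fun z _ => ?_
  rw [mul_zero, neg_zero, Ech_zero, mul_one]

lemma Ftr_conv (f g : ZMod N → ℝ) (r : ZMod N) :
    Ftr N (fun z => ∑ u : ZMod N, f u * g (z - u)) r = Ftr N f r * Ftr N g r := by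
  unfold Ftr
  have h1 : ∀ z : ZMod N, ((∑ u : ZMod N, f u * g (z - u) : ℝ) : ℂ) * Ech N (-(z * r))
      = ∑ u : ZMod N, (f u : ℂ) * (g (z - u) : ℂ) * Ech N (-(z * r)) := by
    intro z
    push_cast
    rw [Finset.sum_mul]
  simp only [h1]
  rw [Finset.sum_comm]
  rw [Finset.sum_mul]
  refine Finset.sum_congr rfl fun u _ => ?_
  rw [Finset.mul_sum]
  refine Fintype.sum_equiv (Equiv.subRight u) _ _ fun z => ?_
  simp only [Equiv.subRight_apply]
  have h2 : -(z * r) = -(u * r) + -((z - u) * r) := by ring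
  rw [h2, Ech_add]
  ring

end FtrSec2

section FtrSec3
variable (N : ℕ) [NeZero N]

lemma Ftr_inversion (f : ZMod N → ℝ) (x : ZMod N) :
    (N : ℂ) * (f x : ℂ) = ∑ r : ZMod N, Ftr N f r * Ech N (x * r) := by
  unfold Ftr
  have h1 : ∀ r : ZMod N, (∑ z : ZMod N, (f z : ℂ) * Ech N (-(z * r))) * Ech N (x * r)
      = ∑ z : ZMod N, (f z : ℂ) * Ech N ((x - z) * r) := by
    intro r
    rw [Finset.sum_mul]
    refine Finset.sum_congr rfl fun z _ => ?_
    have h2 : (x - z) * r = -(z * r) + x * r := by ring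
    rw [h2, Ech_add]
    ring
  simp only [h1]
  rw [Finset.sum_comm]
  have h3 : ∀ z : ZMod N, ∑ r : ZMod N, (f z : ℂ) * Ech N ((x - z) * r)
      = (f z : ℂ) * (if x - z = 0 then (N : ℂ) else 0) := by
    intro z
    rw [← Finset.mul_sum, sum_Ech]
  simp only [h3]
  rw [Finset.sum_eq_single x]
  · rw [sub_self, if_pos rfl]; ring
  · intro b _ hb
    rw [if_neg (sub_ne_zero.mpr (Ne.symm hb)), mul_zero]
  · intro h; exact absurd (Finset.mem_univ x) h

lemma Ftr_parseval (g : ZMod N → ℝ) :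
    ∑ r : ZMod N, ‖Ftr N g r‖ ^ 2 = N * ∑ z : ZMod N, (g z) ^ 2 := by
  have key : ∑ r : ZMod N, (Ftr N g r * (starRingEnd ℂ) (Ftr N g r))
      = (N : ℂ) * ∑ z : ZMod N, ((g z : ℂ)) ^ 2 := by
    unfold Ftr
    have h1 : ∀ r : ZMod N, (∑ z : ZMod N, (g z : ℂ) * Ech N (-(z * r))) *
        (starRingEnd ℂ) (∑ w : ZMod N, (g w : ℂ) * Ech N (-(w * r)))
        = ∑ z : ZMod N, ∑ w : ZMod N, (g z : ℂ) * (g w : ℂ) * Ech N ((w - z) * r) := by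
      intro r
      rw [map_sum, Finset.sum_mul_sum]
      refine Finset.sum_congr rfl fun z _ => Finset.sum_congr rfl fun w _ => ?_
      rw [map_mul, conj_Ech, Complex.conj_ofReal]
      have h2 : (w - z) * r = -(z * r) + -(-(w * r)) := by ring
      rw [h2, Ech_add]
      ring
    simp only [h1]
    rw [Finset.sum_comm]
    have h3 : ∀ z : ZMod N, ∑ r : ZMod N, ∑ w : ZMod N, ((g z : ℂ) * (g w : ℂ)) * Ech N ((w - z) * r)
        = (N:ℂ) * (g z : ℂ)^2 := by
      intro z
      rw [Finset.sum_comm]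
      have h4 : ∀ w : ZMod N, ∑ r : ZMod N, ((g z : ℂ) * (g w : ℂ)) * Ech N ((w - z) * r)
          = (g z : ℂ) * (g w : ℂ) * (if w - z = 0 then (N:ℂ) else 0) := by
        intro w
        rw [← Finset.mul_sum, sum_Ech]
      simp only [h4]
      rw [Finset.sum_eq_single z]
      · rw [sub_self, if_pos rfl]; ring
      · intro b _ hb
        rw [if_neg (sub_ne_zero.mpr hb), mul_zero]
      · intro h; exact absurd (Finset.mem_univ z) h
    rw [Finset.sum_congr rfl (fun z _ => h3 z), ← Finset.mul_sum]
  have h5 : ∀ r : ZMod N, Ftr N g r * (starRingEnd ℂ) (Ftr N g r)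
      = ((‖Ftr N g r‖ ^ 2 : ℝ) : ℂ) := by
    intro r
    rw [Complex.mul_conj, Complex.normSq_eq_norm_sq]
  rw [Finset.sum_congr rfl (fun r _ => h5 r)] at key
  exact_mod_cast key

end FtrSec3

lemma nint_add_int (s : ℝ) (m : ℤ) : nint (s + m) = nint s := by
  unfold nint
  rw [round_add_intCast]
  push_cast
  ring_nf

lemma card_shift_filter (N : ℕ) [NeZero N] (ε : ℝ) (hε0 : 0 < ε) (hε1 : ε < 1) (a : ZMod N) :
    (Finset.univ.filter (fun u : ZMod N => (((a - u).val : ℕ) : ℝ) < ε * N)).card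
      = ⌈ε * N⌉₊ := by
  classical
  have hNpos : 0 < N := Nat.pos_of_ne_zero (NeZero.ne N)
  have hNr : (0:ℝ) < N := by exact_mod_cast hNpos
  have hcN : ⌈ε * N⌉₊ ≤ N := by
    apply Nat.ceil_le.mpr
    nlinarith
  have h1 : (Finset.univ.filter (fun u : ZMod N => (((a - u).val : ℕ) : ℝ) < ε * N)).card
      = (Finset.univ.filter (fun v : ZMod N => ((v.val : ℕ) : ℝ) < ε * N)).card := by
    apply Finset.card_nbij (fun u => a - u)
    · intro u hu
      simp only [Finset.mem_coe, Finset.mem_filter, Finset.mem_univ, true_and] at hu ⊢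
      exact hu
    · intro u hu v hv huv
      simpa using sub_right_injective huv
    · intro v hv
      simp only [Finset.coe_filter, Set.mem_setOf_eq, Set.mem_image] at hv ⊢
      exact ⟨a - v, by simpa using hv.2, by ring⟩
  rw [h1]
  have h2 : (Finset.univ.filter (fun v : ZMod N => ((v.val : ℕ) : ℝ) < ε * N)).card
      = ((Finset.range N).filter (fun j => ((j : ℕ) : ℝ) < ε * N)).card := by
    apply Finset.card_nbij (fun v => v.val)
    · intro v hv
      simp only [Finset.mem_coe, Finset.mem_filter, Finset.mem_univ, true_and, Finset.mem_range] at hv ⊢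
      exact ⟨ZMod.val_lt v, hv⟩
    · intro u _ v _ huv
      exact ZMod.val_injective N huv
    · intro j hj
      simp only [Finset.coe_filter, Set.mem_setOf_eq, Finset.mem_range, Set.mem_image] at hj ⊢
      refine ⟨(j : ZMod N), ⟨Finset.mem_univ _, ?_⟩, ?_⟩
      · rw [ZMod.val_cast_of_lt hj.1]; exact hj.2
      · rw [ZMod.val_cast_of_lt hj.1]
  rw [h2]
  have h3 : (Finset.range N).filter (fun j => ((j : ℕ) : ℝ) < ε * N) = Finset.range ⌈ε * N⌉₊ := by
    ext j
    simp only [Finset.mem_filter, Finset.mem_range, Nat.lt_ceil]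
    constructor
    · rintro ⟨_, h⟩; exact h
    · intro h; exact ⟨lt_of_lt_of_le (Nat.lt_ceil.mpr h) hcN, h⟩
  rw [h3, Finset.card_range]

lemma nint_le_of_int_shift (s t : ℝ) (ε : ℝ) (hε : 0 < ε) (m : ℤ) (hst : s = t + m)
    (ht : |t| < ε) : nint s ≤ ε := by
  rw [hst, nint_add_int]
  rcases le_or_gt (1/2 : ℝ) ε with h | h
  · exact le_trans (abs_sub_round t) h
  · have h0 : round t = 0 := by
      rw [round_eq_zero_iff]
      constructor
      · have := abs_lt.mp ht; linarith
      · have := abs_lt.mp ht; linarith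
    unfold nint
    rw [h0]
    simp only [Int.cast_zero, sub_zero]
    exact le_of_lt ht

lemma bohr_lower (N : ℕ) [NeZero N] (ε : ℝ) (hε0 : 0 < ε) (hε1 : ε < 1)
    (ℛ ℬ : Finset (ZMod N))
    (hℬ : ∀ x : ZMod N, x ∈ ℬ ↔
      ∀ r ∈ ℛ, nint (((x.val : ℕ) : ℝ) * ((r.val : ℕ) : ℝ) / N) ≤ ε) :
    ε ^ ℛ.card * N ≤ (ℬ.card : ℝ) := by
  classical
  have hNpos : 0 < N := Nat.pos_of_ne_zero (NeZero.ne N)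
  have hNr : (0:ℝ) < N := by exact_mod_cast hNpos
  set ι := {r : ZMod N // r ∈ ℛ} with hι
  set k := ℛ.card with hk
  have hcard_ι : Fintype.card ι = k := Fintype.card_coe ℛ
  set c := ⌈ε * N⌉₊ with hc
  have hc1 : (ε * N : ℝ) ≤ c := Nat.le_ceil _
  -- the family of candidate sets
  set S : (ι → ZMod N) → Finset (ZMod N) := fun t =>
    Finset.univ.filter (fun x => ∀ i : ι, (((x * (i : ZMod N) - t i).val : ℕ) : ℝ) < ε * N)
    with hS
  -- total count
  have hsum : ∑ t : ι → ZMod N, (S t).card = N * c ^ k := by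
    have h1 : ∀ t : ι → ZMod N, (S t).card
        = ∑ x : ZMod N, ∏ i : ι, (if (((x * (i : ZMod N) - t i).val : ℕ) : ℝ) < ε * N
            then 1 else 0) := by
      intro t
      rw [hS]
      rw [Finset.card_filter]
      refine Finset.sum_congr rfl fun x _ => ?_
      rw [Finset.prod_boole]
      simp
    simp only [h1]
    rw [Finset.sum_comm]
    have h2 : ∀ x : ZMod N,
        ∑ t : ι → ZMod N, ∏ i : ι, (if (((x * (i : ZMod N) - t i).val : ℕ) : ℝ) < ε * N
            then 1 else 0) = c ^ k := by
      intro x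
      have hps := Finset.prod_univ_sum (fun _ : ι => (Finset.univ : Finset (ZMod N)))
        (fun i u => if (((x * (i : ZMod N) - u).val : ℕ) : ℝ) < ε * N then (1:ℕ) else 0)
      rw [Fintype.piFinset_univ] at hps
      rw [← hps]
      have h3 : ∀ i : ι, ∑ u : ZMod N, (if (((x * (i : ZMod N) - u).val : ℕ) : ℝ) < ε * N
          then 1 else 0) = c := by
        intro i
        rw [← Finset.card_filter]
        exact card_shift_filter N ε hε0 hε1 (x * (i : ZMod N))
      rw [Finset.prod_congr rfl fun i _ => h3 i, Finset.prod_const, Finset.card_univ, hcard_ι]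
    rw [Finset.sum_congr rfl fun x _ => h2 x, Finset.sum_const, Finset.card_univ, ZMod.card,
      smul_eq_mul]
  -- pigeonhole
  have hpigeon : ∃ t : ι → ZMod N, (ε ^ k * N : ℝ) ≤ ((S t).card : ℝ) := by
    by_contra hcon
    push_neg at hcon
    have hlt : ∑ t : ι → ZMod N, ((S t).card : ℝ)
        < ∑ _t : ι → ZMod N, (ε ^ k * N : ℝ) :=
      Finset.sum_lt_sum_of_nonempty Finset.univ_nonempty (fun t _ => hcon t)
    rw [Finset.sum_const, Finset.card_univ, Fintype.card_fun, hcard_ι, ZMod.card,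
      nsmul_eq_mul] at hlt
    have hsumR : ∑ t : ι → ZMod N, ((S t).card : ℝ) = (N : ℝ) * (c : ℝ) ^ k := by
      exact_mod_cast congrArg (fun n : ℕ => (n : ℝ)) hsum
    rw [hsumR] at hlt
    have hge : (N:ℝ) ^ k * (ε ^ k * N) ≤ (N : ℝ) * (c : ℝ) ^ k := by
      have h4 : ((ε * N) ^ k : ℝ) ≤ (c : ℝ) ^ k :=
        pow_le_pow_left₀ (by positivity) hc1 k
      calc (N:ℝ) ^ k * (ε ^ k * N) = (N:ℝ) * (ε * N) ^ k := by rw [mul_pow]; ring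
        _ ≤ (N:ℝ) * (c:ℝ) ^ k := by nlinarith
    push_cast at hlt
    linarith
  obtain ⟨t, ht⟩ := hpigeon
  have hSpos : 0 < (S t).card := by
    by_contra h
    push_neg at h
    have : (S t).card = 0 := by omega
    rw [this] at ht
    simp only [Nat.cast_zero] at ht
    nlinarith [pow_pos hε0 k]
  obtain ⟨x₀, hx₀⟩ := Finset.card_pos.mp hSpos
  -- shifting S t into ℬ
  have hsubset : ∀ x ∈ S t, x - x₀ ∈ ℬ := by
    intro x hx
    rw [hℬ]
    intro r hr
    set i : ι := ⟨r, hr⟩ with hi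
    rw [hS, Finset.mem_filter] at hx hx₀
    have ha : (((x * r - t i).val : ℕ) : ℝ) < ε * N := hx.2 i
    have hb : (((x₀ * r - t i).val : ℕ) : ℝ) < ε * N := hx₀.2 i
    set A := (x * r - t i).val with hA
    set B := (x₀ * r - t i).val with hB
    have hdvd : (N : ℤ) ∣ (((x - x₀).val * r.val : ℕ) : ℤ) - ((A : ℤ) - (B : ℤ)) := by
      have h0 : (((((x - x₀).val * r.val : ℕ) : ℤ) - ((A : ℤ) - (B : ℤ)) : ℤ) : ZMod N) = 0 := by
        push_cast
        rw [ZMod.natCast_rightInverse, ZMod.natCast_rightInverse, ZMod.natCast_rightInverse,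
          ZMod.natCast_rightInverse]
        ring
      exact (ZMod.intCast_zmod_eq_zero_iff_dvd _ N).mp h0
    obtain ⟨m, hm⟩ := hdvd
    apply nint_le_of_int_shift _ (((A : ℝ) - B) / N) ε hε0 m
    · have hmR : ((x - x₀).val : ℝ) * ((r.val : ℕ) : ℝ) - ((A : ℝ) - B) = (N : ℝ) * m := by
        exact_mod_cast congrArg (fun z : ℤ => (z : ℝ)) hm
      have hN0 : (N:ℝ) ≠ 0 := ne_of_gt hNr
      field_simp
      linarith
    · rw [abs_div, abs_of_pos hNr, div_lt_iff₀ hNr]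
      have hA0 : (0:ℝ) ≤ (A : ℝ) := Nat.cast_nonneg A
      have hB0 : (0:ℝ) ≤ (B : ℝ) := Nat.cast_nonneg B
      rw [abs_lt]
      constructor <;> nlinarith
  have hcardle : (S t).card ≤ ℬ.card := by
    apply Finset.card_le_card_of_injOn (fun x => x - x₀) hsubset
    intro a _ b _ hab
    simpa using sub_left_injective hab
  calc ε ^ k * (N:ℝ) ≤ ((S t).card : ℝ) := ht
    _ ≤ (ℬ.card : ℝ) := by exact_mod_cast hcardle


/-- Let `N` be a prime, `κ > 0`, and `𝔞 : ℤ_N → ℝ_{≥0}` with `Σ 𝔞(x) ≤ 1 + κ`.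
Let `δ = sup_{r ≠ 0} |𝔞̃(r)|`, let `η, ε ∈ (0,1)`,
`ℛ = {r : |𝔞̃(r)| ≥ η}`, `ℬ = {x : ‖xr/N‖ ≤ ε for all r ∈ ℛ}`,
`𝔟 = 1_ℬ/|ℬ|` and `𝔞' = 𝔞 * 𝔟 * 𝔟`. If `ε^{|ℛ|} ≥ δ/κ`, then
`|𝔞'(x)| ≤ (1 + 2κ)/N` for every `x ∈ ℤ_N`. -/
theorem smoothed_bound (N : ℕ) [NeZero N] (hN : N.Prime) (κ : ℝ) (hκ : 0 < κ)
    (𝔞 : ZMod N → ℝ) (h𝔞nonneg : ∀ x, 0 ≤ 𝔞 x) (h𝔞sum : ∑ x : ZMod N, 𝔞 x ≤ 1 + κ)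
    (δ : ℝ) (hδ : δ = sSup {t : ℝ | ∃ r : ZMod N, r ≠ 0 ∧ t = ‖dft N 𝔞 r‖})
    (η ε : ℝ) (hη0 : 0 < η) (hη1 : η < 1) (hε0 : 0 < ε) (hε1 : ε < 1)
    (ℛ : Finset (ZMod N)) (hℛ : ∀ r : ZMod N, r ∈ ℛ ↔ η ≤ ‖dft N 𝔞 r‖)
    (ℬ : Finset (ZMod N))
    (hℬ : ∀ x : ZMod N, x ∈ ℬ ↔
      ∀ r ∈ ℛ, nint (((x.val : ℕ) : ℝ) * ((r.val : ℕ) : ℝ) / N) ≤ ε)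
    (𝔟 : ZMod N → ℝ) (h𝔟 : ∀ x, 𝔟 x = (if x ∈ ℬ then (1 : ℝ) else 0) / (ℬ.card : ℝ))
    (𝔞' : ZMod N → ℝ)
    (h𝔞' : ∀ x, 𝔞' x = ∑ y : ZMod N, (∑ u : ZMod N, 𝔞 u * 𝔟 (y - u)) * 𝔟 (x - y))
    (hcond : δ / κ ≤ ε ^ ℛ.card) :
    ∀ x : ZMod N, |𝔞' x| ≤ (1 + 2 * κ) / N := by
  intro x
  haveI : Fact (1 < N) := ⟨hN.one_lt⟩
  have hNpos : 0 < N := Nat.pos_of_ne_zero (NeZero.ne N)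
  have hNr : (0:ℝ) < N := by exact_mod_cast hNpos
  set k := ℛ.card with hk
  -- ℬ is nonempty
  have h0B : (0 : ZMod N) ∈ ℬ := by
    rw [hℬ]
    intro r _
    simp only [ZMod.val_zero, Nat.cast_zero, zero_mul, zero_div]
    have : nint 0 = 0 := by simp [nint]
    rw [this]; exact hε0.le
  have hBpos : 0 < ℬ.card := Finset.card_pos.mpr ⟨0, h0B⟩
  have hBr : (0:ℝ) < ℬ.card := by exact_mod_cast hBpos
  -- sums of 𝔟
  have hite : ∑ z : ZMod N, (if z ∈ ℬ then (1:ℝ) else 0) = ℬ.card := by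
    rw [Finset.sum_ite_mem, Finset.univ_inter, Finset.sum_const, nsmul_eq_mul, mul_one]
  have hb_sum : ∑ z : ZMod N, 𝔟 z = 1 := by
    simp only [h𝔟]
    rw [← Finset.sum_div, hite, div_self (ne_of_gt hBr)]
  have hb_sq : ∑ z : ZMod N, (𝔟 z) ^ 2 = 1 / ℬ.card := by
    have h1 : ∀ z : ZMod N, (𝔟 z) ^ 2 = (if z ∈ ℬ then (1:ℝ) else 0) / (ℬ.card ^ 2 : ℝ) := by
      intro z
      rw [h𝔟]
      split_ifs <;> simp [div_pow] <;> ring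
    rw [Finset.sum_congr rfl fun z _ => h1 z, ← Finset.sum_div, hite]
    rw [sq]
    field_simp
  -- Fourier coefficients of 𝔞'
  have hF : ∀ r : ZMod N, Ftr N 𝔞' r = Ftr N 𝔞 r * Ftr N 𝔟 r * Ftr N 𝔟 r := by
    intro r
    have h1 : 𝔞' = fun xx => ∑ y : ZMod N,
        (fun z => ∑ u : ZMod N, 𝔞 u * 𝔟 (z - u)) y * 𝔟 (xx - y) := funext h𝔞'
    rw [h1, Ftr_conv, Ftr_conv]
  -- delta bounds
  have hFbound : ∀ r : ZMod N, ‖Ftr N 𝔞 r‖ ≤ ∑ z : ZMod N, 𝔞 z := by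
    intro r
    refine le_trans (norm_sum_le _ _) ?_
    refine Finset.sum_le_sum fun z _ => ?_
    rw [norm_mul, norm_Ech, mul_one, Complex.norm_real, Real.norm_eq_abs,
      abs_of_nonneg (h𝔞nonneg z)]
  have hbdd : BddAbove {t : ℝ | ∃ r : ZMod N, r ≠ 0 ∧ t = ‖dft N 𝔞 r‖} := by
    refine ⟨1 + κ, ?_⟩
    rintro t ⟨r, -, rfl⟩
    rw [dft_eq_Ftr]
    exact le_trans (hFbound r) h𝔞sum
  have hδge : ∀ r : ZMod N, r ≠ 0 → ‖Ftr N 𝔞 r‖ ≤ δ := by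
    intro r hr
    rw [hδ]
    refine le_csSup hbdd ?_
    exact ⟨r, hr, by rw [dft_eq_Ftr]⟩
  have hδ0 : 0 ≤ δ := le_trans (norm_nonneg _) (hδge 1 one_ne_zero)
  -- Parseval for 𝔟
  have hpars : ∑ r : ZMod N, ‖Ftr N 𝔟 r‖ ^ 2 = (N : ℝ) / ℬ.card := by
    rw [Ftr_parseval, hb_sq]
    ring
  -- Bohr lower bound
  have hbohr : ε ^ k * N ≤ (ℬ.card : ℝ) := bohr_lower N ε hε0 hε1 ℛ ℬ hℬ
  -- main estimate
  have hinv := Ftr_inversion N 𝔞' x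
  have hmain : (N : ℝ) * |𝔞' x| ≤ ∑ r : ZMod N, ‖Ftr N 𝔞 r‖ * ‖Ftr N 𝔟 r‖ ^ 2 := by
    have h2 : (N : ℝ) * |𝔞' x| = ‖(N : ℂ) * ((𝔞' x : ℝ) : ℂ)‖ := by
      rw [norm_mul, Complex.norm_natCast, Complex.norm_real, Real.norm_eq_abs]
    rw [h2, hinv]
    refine le_trans (norm_sum_le _ _) ?_
    refine Finset.sum_le_sum fun r _ => ?_
    rw [hF, norm_mul, norm_Ech, mul_one, norm_mul, norm_mul, sq]
    exact le_of_eq (by ring)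
  -- split off the zero frequency
  have hsplit : ∑ r : ZMod N, ‖Ftr N 𝔞 r‖ * ‖Ftr N 𝔟 r‖ ^ 2
      = ‖Ftr N 𝔞 0‖ * ‖Ftr N 𝔟 0‖ ^ 2
        + ∑ r ∈ Finset.univ.erase 0, ‖Ftr N 𝔞 r‖ * ‖Ftr N 𝔟 r‖ ^ 2 :=
    (Finset.add_sum_erase _ _ (Finset.mem_univ 0)).symm
  have hzero : ‖Ftr N 𝔞 0‖ * ‖Ftr N 𝔟 0‖ ^ 2 ≤ 1 + κ := by
    rw [Ftr_zero, Ftr_zero, hb_sum, Complex.norm_real, Complex.norm_real,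
      Real.norm_eq_abs, Real.norm_eq_abs,
      abs_of_nonneg (Finset.sum_nonneg fun z _ => h𝔞nonneg z)]
    simp only [abs_one, one_pow, mul_one]
    exact h𝔞sum
  have hrest : ∑ r ∈ Finset.univ.erase 0, ‖Ftr N 𝔞 r‖ * ‖Ftr N 𝔟 r‖ ^ 2 ≤ κ := by
    have h3 : ∑ r ∈ Finset.univ.erase 0, ‖Ftr N 𝔞 r‖ * ‖Ftr N 𝔟 r‖ ^ 2
        ≤ ∑ r ∈ Finset.univ.erase 0, δ * ‖Ftr N 𝔟 r‖ ^ 2 := by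
      refine Finset.sum_le_sum fun r hr => ?_
      have hr0 : r ≠ 0 := (Finset.mem_erase.mp hr).1
      exact mul_le_mul_of_nonneg_right (hδge r hr0) (by positivity)
    have h4 : ∑ r ∈ Finset.univ.erase 0, δ * ‖Ftr N 𝔟 r‖ ^ 2
        ≤ δ * ((N:ℝ) / ℬ.card) := by
      rw [← Finset.mul_sum, ← hpars]
      refine mul_le_mul_of_nonneg_left ?_ hδ0
      refine Finset.sum_le_sum_of_subset_of_nonneg (Finset.erase_subset _ _)
        fun r _ _ => by positivity
    have h5 : δ * ((N:ℝ) / ℬ.card) ≤ κ := by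
      have hδk : δ ≤ ε ^ k * κ := (div_le_iff₀ hκ).mp hcond
      rw [mul_div_assoc', div_le_iff₀ hBr]
      have h6 : δ * (N:ℝ) ≤ κ * (ε ^ k * N) := by nlinarith
      have h7 : κ * (ε ^ k * N) ≤ κ * ℬ.card := mul_le_mul_of_nonneg_left hbohr hκ.le
      linarith
    linarith
  have hfinal : (N:ℝ) * |𝔞' x| ≤ 1 + 2 * κ := by
    rw [hsplit] at hmain
    linarith
  rw [le_div_iff₀ hNr]
  linarith
end

section
/- Let K, m be positive integers, set κ = 10⁻⁴K⁻¹m⁻¹, and let N be a sufficiently large prime. Let A ⊆ ℤ_N with |A| ≥ N/(4mK), and let 𝔞': ℤ_N → ℝ_{≥0} satisfy 𝔞'(x) ≤ (1+2κ)/N for all x ∈ ℤ_N and Σ_{x∈ℤ_N} 𝔞'(x) ≥ 1 − κ. Then Σ_{x,y,z∈ℤ_N, x+y=z} 1_A(x)1_A(y)𝔞'(z) ≥ κ⁴·N. -/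
open Finset

set_option maxHeartbeats 1000000 in
/-- Lemma 2.8 of the paper: let `K, m` be positive integers, `κ = 10⁻⁴K⁻¹m⁻¹`,
and `N` a sufficiently large prime. If `A ⊆ ℤ_N` has `|A| ≥ N/(4mK)` and
`𝔞' : ℤ_N → ℝ_{≥0}` satisfies `𝔞'(x) ≤ (1+2κ)/N` for all `x` and
`Σ_x 𝔞'(x) ≥ 1 − κ`, then `Σ_{x+y=z} 1_A(x)1_A(y)𝔞'(z) ≥ κ⁴N`. -/
theorem major_term_bound (K m : ℕ) (hK : 0 < K) (hm : 0 < m) (κ : ℝ)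
    (hκ : κ = (1 / 10000 : ℝ) / ((K : ℝ) * m)) :
    ∃ N₀ : ℕ, ∀ (N : ℕ) [NeZero N], N₀ ≤ N → N.Prime →
    ∀ A : Finset (ZMod N), (N : ℝ) / (4 * m * K) ≤ (A.card : ℝ) →
    ∀ 𝔞' : ZMod N → ℝ, (∀ x, 0 ≤ 𝔞' x) → (∀ x, 𝔞' x ≤ (1 + 2 * κ) / N) →
      1 - κ ≤ ∑ x : ZMod N, 𝔞' x →
    κ ^ 4 * N ≤ ∑ x : ZMod N, ∑ y : ZMod N,
      (if x ∈ A then (1 : ℝ) else 0) * (if y ∈ A then (1 : ℝ) else 0) * 𝔞' (x + y) := by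
  refine ⟨1, fun N _ hN hNp A hA 𝔞' h0 hub hsum => ?_⟩
  have hn : (0 : ℝ) < (N : ℝ) := by exact_mod_cast Nat.pos_of_ne_zero (NeZero.ne N)
  set n : ℝ := (N : ℝ) with hn_def
  have hu : (1 : ℝ) ≤ (K : ℝ) * m := by
    have : 1 ≤ K * m := Nat.one_le_iff_ne_zero.mpr (Nat.mul_pos hK hm).ne'
    exact_mod_cast this
  have hupos : (0 : ℝ) < (K : ℝ) * m := lt_of_lt_of_le one_pos hu
  have hκpos : 0 < κ := by rw [hκ]; positivity
  have hκu : κ * ((K : ℝ) * m) = 1 / 10000 := by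
    rw [hκ]; field_simp
  have hκle : κ ≤ 1 / 10000 := by
    nlinarith [mul_le_mul_of_nonneg_left hu hκpos.le]
  set a : ℝ := (A.card : ℝ) with ha_def
  -- T : points where 𝔞' is small
  set T : Finset (ZMod N) := univ.filter (fun z => 𝔞' z < 1 / (2 * n)) with hT_def
  set t : ℝ := (T.card : ℝ) with ht_def
  have hcnat : T.card + (univ.filter (fun z => ¬ 𝔞' z < 1 / (2 * n))).card = N := by
    rw [hT_def]
    have := Finset.card_filter_add_card_filter_not (s := (univ : Finset (ZMod N)))
      (p := fun z => 𝔞' z < 1 / (2 * n))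
    rwa [Finset.card_univ, ZMod.card] at this
  have hcards : (T.card : ℝ) + ((univ.filter (fun z => ¬ 𝔞' z < 1 / (2 * n))).card : ℝ) = n := by
    have h' := congrArg (fun k : ℕ => (k : ℝ)) hcnat
    push_cast at h'
    rw [hn_def]; linarith [h']
  have hapos : 0 ≤ a := by rw [ha_def]; positivity
  have htpos : 0 ≤ t := by rw [ht_def]; positivity
  have htn : t ≤ n := by
    have : (0:ℝ) ≤ ((univ.filter (fun z => ¬ 𝔞' z < 1 / (2 * n))).card : ℝ) := by positivity
    linarith [hcards]
  -- bound on t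
  have ht : t ≤ 6 * κ * n := by
    have hsplit : ∑ x : ZMod N, 𝔞' x
        = ∑ x ∈ T, 𝔞' x + ∑ x ∈ univ.filter (fun z => ¬ 𝔞' z < 1 / (2 * n)), 𝔞' x := by
      rw [hT_def]
      exact (Finset.sum_filter_add_sum_filter_not univ _ 𝔞').symm
    have hb1 : ∑ x ∈ T, 𝔞' x ≤ t * (1 / (2 * n)) := by
      rw [ht_def]
      calc ∑ x ∈ T, 𝔞' x ≤ ∑ _x ∈ T, (1 / (2 * n)) := by
            refine Finset.sum_le_sum fun i hi => ?_
            have := (Finset.mem_filter.mp hi).2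
            linarith
        _ = (T.card : ℝ) * (1 / (2 * n)) := by rw [Finset.sum_const, nsmul_eq_mul]
    have hb2 : ∑ x ∈ univ.filter (fun z => ¬ 𝔞' z < 1 / (2 * n)), 𝔞' x
        ≤ (n - t) * ((1 + 2 * κ) / n) := by
      have : ∑ x ∈ univ.filter (fun z => ¬ 𝔞' z < 1 / (2 * n)), 𝔞' x
          ≤ ∑ _x ∈ univ.filter (fun z => ¬ 𝔞' z < 1 / (2 * n)), ((1 + 2 * κ) / n) :=
        Finset.sum_le_sum fun i _ => hub i
      rw [Finset.sum_const, nsmul_eq_mul] at this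
      have hcard : ((univ.filter (fun z => ¬ 𝔞' z < 1 / (2 * n))).card : ℝ) = n - t := by
        rw [ht_def]; linarith [hcards]
      rw [hcard] at this
      exact this
    have hkey : 1 - κ ≤ t * (1 / (2 * n)) + (n - t) * ((1 + 2 * κ) / n) := by
      calc 1 - κ ≤ ∑ x : ZMod N, 𝔞' x := hsum
        _ = _ := hsplit
        _ ≤ _ := add_le_add hb1 hb2
    have hkey2 : (1 - κ) * n ≤ t * (1/2) + (n - t) * (1 + 2 * κ) := by
      have := mul_le_mul_of_nonneg_right hkey hn.le
      calc (1 - κ) * n ≤ (t * (1 / (2 * n)) + (n - t) * ((1 + 2 * κ) / n)) * n := this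
        _ = t * (1/2) + (n - t) * (1 + 2 * κ) := by field_simp
    nlinarith [mul_pos hκpos hn]
  -- rewrite double sum
  have hrw : (∑ x : ZMod N, ∑ y : ZMod N,
      (if x ∈ A then (1 : ℝ) else 0) * (if y ∈ A then (1 : ℝ) else 0) * 𝔞' (x + y))
      = ∑ x ∈ A, ∑ y ∈ A, 𝔞' (x + y) := by
    calc ∑ x : ZMod N, ∑ y : ZMod N,
        (if x ∈ A then (1 : ℝ) else 0) * (if y ∈ A then (1 : ℝ) else 0) * 𝔞' (x + y)
        = ∑ x : ZMod N, (if x ∈ A then ∑ y ∈ A, 𝔞' (x + y) else 0) := by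
          refine Finset.sum_congr rfl fun x _ => ?_
          split_ifs with hx
          · simp only [hx, if_true, one_mul, ite_mul, zero_mul]
            rw [Finset.sum_ite_mem, univ_inter]
          · simp [hx]
      _ = ∑ x ∈ A, ∑ y ∈ A, 𝔞' (x + y) := by rw [Finset.sum_ite_mem, univ_inter]
  rw [hrw]
  -- inner bound for each x
  have hinner : ∀ x : ZMod N, (a - t) * (1 / (2 * n)) ≤ ∑ y ∈ A, 𝔞' (x + y) := by
    intro x
    have hstep1 : ∑ y ∈ A, ((1 / (2 * n)) - (if x + y ∈ T then 1 / (2 * n) else 0))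
        ≤ ∑ y ∈ A, 𝔞' (x + y) := by
      refine Finset.sum_le_sum fun y _ => ?_
      by_cases hmem : x + y ∈ T
      · simp only [hmem, if_true]
        simpa using h0 (x + y)
      · simp only [hmem, if_false, sub_zero]
        have : ¬ 𝔞' (x + y) < 1 / (2 * n) := by
          intro hlt
          exact hmem (Finset.mem_filter.mpr ⟨Finset.mem_univ _, hlt⟩)
        linarith [not_lt.mp this]
    have hstep2 : ∑ y ∈ A, (if x + y ∈ T then (1 / (2 * n) : ℝ) else 0) ≤ t * (1 / (2 * n)) := by
      have h1 : ∑ y ∈ A, (if x + y ∈ T then (1 / (2 * n) : ℝ) else 0)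
          ≤ ∑ y : ZMod N, (if x + y ∈ T then (1 / (2 * n) : ℝ) else 0) := by
        refine Finset.sum_le_sum_of_subset_of_nonneg (Finset.subset_univ A) fun i _ _ => ?_
        split_ifs
        · positivity
        · exact le_rfl
      have h2 : ∑ y : ZMod N, (if x + y ∈ T then (1 / (2 * n) : ℝ) else 0)
          = ∑ z : ZMod N, (if z ∈ T then (1 / (2 * n) : ℝ) else 0) :=
        Fintype.sum_equiv (Equiv.addLeft x) _ _ (fun y => by simp)
      have h3 : ∑ z : ZMod N, (if z ∈ T then (1 / (2 * n) : ℝ) else 0) = t * (1 / (2 * n)) := by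
        rw [Finset.sum_ite_mem, univ_inter, Finset.sum_const, nsmul_eq_mul, ht_def]
      calc (∑ y ∈ A, if x + y ∈ T then (1 / (2 * n) : ℝ) else 0) ≤ _ := h1
        _ = _ := h2
        _ = t * (1 / (2 * n)) := h3
    have heq : ∑ y ∈ A, ((1 / (2 * n)) - (if x + y ∈ T then 1 / (2 * n) else 0))
        = a * (1 / (2 * n)) - ∑ y ∈ A, (if x + y ∈ T then (1 / (2 * n) : ℝ) else 0) := by
      rw [Finset.sum_sub_distrib, Finset.sum_const, nsmul_eq_mul, ha_def]
    calc (a - t) * (1 / (2 * n))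
        = a * (1 / (2 * n)) - t * (1 / (2 * n)) := by ring
      _ ≤ a * (1 / (2 * n)) - ∑ y ∈ A, (if x + y ∈ T then (1 / (2 * n) : ℝ) else 0) := by
          linarith [hstep2]
      _ = ∑ y ∈ A, ((1 / (2 * n)) - (if x + y ∈ T then 1 / (2 * n) else 0)) := heq.symm
      _ ≤ ∑ y ∈ A, 𝔞' (x + y) := hstep1
  have hmain : a * ((a - t) * (1 / (2 * n))) ≤ ∑ x ∈ A, ∑ y ∈ A, 𝔞' (x + y) := by
    calc a * ((a - t) * (1 / (2 * n))) = ∑ _x ∈ A, ((a - t) * (1 / (2 * n))) := by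
          rw [Finset.sum_const, nsmul_eq_mul]
      _ ≤ ∑ x ∈ A, ∑ y ∈ A, 𝔞' (x + y) := Finset.sum_le_sum fun x _ => hinner x
  -- final arithmetic
  clear_value n t a
  have h4ua : n ≤ 4 * ((K : ℝ) * m) * a := by
    have h' : n / (4 * (m : ℝ) * K) ≤ a := hA
    rw [div_le_iff₀ (by positivity)] at h'
    nlinarith [h']
  have hκn : κ * n ≤ (4 / 10000) * a := by
    calc κ * n ≤ κ * (4 * ((K : ℝ) * m) * a) := mul_le_mul_of_nonneg_left h4ua hκpos.le
      _ = 4 * (κ * ((K : ℝ) * m)) * a := by ring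
      _ = (4 / 10000) * a := by rw [hκu]; ring
  refine le_trans ?_ hmain
  rw [show a * ((a - t) * (1 / (2 * n))) = a * (a - t) / (2 * n) by ring,
    le_div_iff₀ (by positivity)]
  have hp : 0 ≤ κ * n := by positivity
  have hp2 : (κ * n) * (κ * n) ≤ ((4/10000) * a) * ((4/10000) * a) :=
    mul_le_mul hκn hκn hp (by positivity)
  have hκ2 : κ * κ ≤ (1/10000) * (1/10000) := mul_le_mul hκle hκle hκpos.le (by norm_num)
  have h4 : (κ * κ) * ((κ * n) * (κ * n))
      ≤ ((1/10000) * (1/10000)) * (((4/10000) * a) * ((4/10000) * a)) :=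
    mul_le_mul hκ2 hp2 (by positivity) (by norm_num)
  have hat : a * t ≤ a * (6 * (κ * n)) := mul_le_mul_of_nonneg_left (by linarith) hapos
  have hat2 : a * (κ * n) ≤ a * ((4/10000) * a) := mul_le_mul_of_nonneg_left hκn hapos
  nlinarith [h4, hat, hat2, sq_nonneg a, hapos, hp]
end
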